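/- Let ι be a nonempty directed index set with filter l, let r : ι → (0,∞) satisfy r_λ → +∞, and for each λ let P_λ and P̂_λ be mutually absolutely continuous probability measures with entropy production σ_λ := log(dP_λ/dP̂_λ). Let I : ℝ → [0,+∞] satisfy the large-deviation lower bound liminf_λ r_λ^{−1} log P_λ(r_λ^{−1}σ_λ ∈ U) ≥ −inf_{s∈U} I(s) for every open set U ⊆ ℝ, and set ē(α) := limsup_λ r_λ^{−1} log ∫ e^{−ασ_λ} dP_λ. Then the lower and upper Chernoff exponents c̲ := liminf_λ r_λ^{−1} log(1 − ‖P_λ − P̂_λ‖_var) and c̄ := limsup_λ r_λ^{−1} log(1 − ‖P_λ − P̂_λ‖_var) satisfy −I(0) ≤ c̲ ≤ c̄ ≤ inf_{α∈[0,1]} ē(α). -/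

import Mathlib

open MeasureTheory Filter
open scoped ENNReal

/-- The entropy production observable of a pair of measures:
`σ(x) = log (dP/dQ)(x)`. -/
noncomputable def entropyProduction {Ω : Type*} [MeasurableSpace Ω]
    (P Q : Measure Ω) (x : Ω) : ℝ :=
  Real.log ((P.rnDeriv Q x).toReal)

/-- The total variation distance `‖P − Q‖_var = sup_Γ (P(Γ) − Q(Γ))`,
the supremum running over measurable sets. -/
noncomputable def tvDist {Ω : Type*} [MeasurableSpace Ω] (P Q : Measure Ω) : ℝ≥0∞ :=
  ⨆ (Γ : Set Ω) (_ : MeasurableSet Γ), (P Γ - Q Γ)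

section Aux

variable {Ω : Type*} [MeasurableSpace Ω] {P Q : Measure Ω}

lemma measurable_entropyProduction (P Q : Measure Ω) :
    Measurable (entropyProduction P Q) :=
  ((Measure.measurable_rnDeriv P Q).ennreal_toReal).log

lemma rnDeriv_rev_ae [IsFiniteMeasure P] [IsFiniteMeasure Q] (hac : P ≪ Q) :
    ∀ᵐ x ∂P, Q.rnDeriv P x = ENNReal.ofReal (Real.exp (-(entropyProduction P Q x)))
      ∧ ((1:ℝ≥0∞) ≤ P.rnDeriv Q x → 0 ≤ entropyProduction P Q x) := by
  filter_upwards [Measure.rnDeriv_pos hac, hac.ae_le (Measure.rnDeriv_lt_top P Q),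
    Measure.inv_rnDeriv hac] with x h1 h2 h3
  have ht : 0 < (P.rnDeriv Q x).toReal := ENNReal.toReal_pos h1.ne' h2.ne
  refine ⟨?_, ?_⟩
  · rw [← h3]
    simp only [Pi.inv_apply]
    rw [entropyProduction, Real.exp_neg, Real.exp_log ht, ENNReal.ofReal_inv_of_pos ht,
      ENNReal.ofReal_toReal h2.ne]
  · intro hx
    have : (1:ℝ) ≤ (P.rnDeriv Q x).toReal := by
      simpa using ENNReal.toReal_mono h2.ne hx
    exact Real.log_nonneg this

lemma one_sub_tvDist_le [IsProbabilityMeasure P] [IsProbabilityMeasure Q]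
    (hac : P ≪ Q) (hac' : Q ≪ P) {α : ℝ} (hα0 : 0 ≤ α) (hα1 : α ≤ 1) :
    1 - tvDist P Q ≤ ∫⁻ x, ENNReal.ofReal (Real.exp (-α * entropyProduction P Q x)) ∂P := by
  set σ := entropyProduction P Q with hσdef
  set g : Ω → ℝ≥0∞ := fun x => ENNReal.ofReal (Real.exp (-α * σ x)) with hg
  have hgm : Measurable g :=
    (((measurable_entropyProduction P Q).const_mul (-α)).exp).ennreal_ofReal
  set Γ : Set Ω := {x | 1 ≤ P.rnDeriv Q x} with hΓdef
  have hΓ : MeasurableSet Γ := measurableSet_le measurable_const (Measure.measurable_rnDeriv P Q)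
  have htv : P Γ - Q Γ ≤ tvDist P Q := by
    rw [tvDist]
    exact le_iSup₂ (f := fun Γ (_ : MeasurableSet Γ) => P Γ - Q Γ) Γ hΓ
  have step1 : 1 - tvDist P Q ≤ P Γᶜ + Q Γ := by
    refine le_trans (tsub_le_tsub_left htv 1) ?_
    rw [tsub_le_iff_right]
    have hPc : P Γᶜ = 1 - P Γ := by
      rw [measure_compl hΓ (measure_ne_top _ _), measure_univ]
    calc (1:ℝ≥0∞) = (1 - P Γ) + P Γ := (tsub_add_cancel_of_le prob_le_one).symm
    _ ≤ (1 - P Γ) + (Q Γ + (P Γ - Q Γ)) := by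
        gcongr
        exact le_tsub_add.trans (by rw [add_comm])
    _ = P Γᶜ + Q Γ + (P Γ - Q Γ) := by rw [hPc, add_assoc]
  have step2 : P Γᶜ ≤ ∫⁻ x in Γᶜ, g x ∂P := by
    rw [← setLIntegral_one]
    refine setLIntegral_mono hgm fun x hx => ?_
    have hx' : P.rnDeriv Q x ≤ 1 :=
      le_of_not_ge (by simpa [hΓdef] using hx)
    have ht : (P.rnDeriv Q x).toReal ≤ 1 := by
      simpa using ENNReal.toReal_mono (by simp) hx'
    have hlog : σ x ≤ 0 := Real.log_nonpos ENNReal.toReal_nonneg ht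
    have : (1:ℝ) ≤ Real.exp (-α * σ x) :=
      Real.one_le_exp (by nlinarith)
    simpa [hg] using ENNReal.one_le_ofReal.2 this
  have step3 : Q Γ ≤ ∫⁻ x in Γ, g x ∂P := by
    rw [← Measure.setLIntegral_rnDeriv hac' Γ]
    refine setLIntegral_mono_ae hgm.aemeasurable ?_
    filter_upwards [rnDeriv_rev_ae hac] with x hx hxΓ
    have hσ0 : 0 ≤ σ x := hx.2 hxΓ
    rw [hx.1]
    refine ENNReal.ofReal_le_ofReal (Real.exp_le_exp.2 ?_)
    nlinarith
  calc 1 - tvDist P Q ≤ P Γᶜ + Q Γ := step1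
  _ ≤ ∫⁻ x in Γᶜ, g x ∂P + ∫⁻ x in Γ, g x ∂P := add_le_add step2 step3
  _ = ∫⁻ x, g x ∂P := by rw [add_comm, lintegral_add_compl g hΓ]

lemma le_one_sub_tvDist [IsProbabilityMeasure P] [IsProbabilityMeasure Q]
    (hac : P ≪ Q) (hac' : Q ≪ P) {c : ℝ} (hc : 0 ≤ c) {A : Set Ω}
    (hbound : ∀ x ∈ A, entropyProduction P Q x ≤ c) :
    ENNReal.ofReal (Real.exp (-c)) * P A ≤ 1 - tvDist P Q := by
  set m : ℝ≥0∞ := ENNReal.ofReal (Real.exp (-c)) with hm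
  have hm1 : m ≤ 1 := ENNReal.ofReal_le_one.2 (Real.exp_le_one_iff.2 (by linarith))
  have hkey : ∀ Γ : Set Ω, MeasurableSet Γ → P Γ + m * P A ≤ 1 + Q Γ := by
    intro Γ hΓ
    have h1 : m * P (A ∩ Γ) ≤ Q (A ∩ Γ) := by
      rw [← Measure.setLIntegral_rnDeriv hac' (A ∩ Γ), ← setLIntegral_const]
      refine setLIntegral_mono_ae (Measure.measurable_rnDeriv Q P).aemeasurable ?_
      filter_upwards [rnDeriv_rev_ae hac] with x hx hxA
      rw [hx.1]
      exact ENNReal.ofReal_le_ofReal (Real.exp_le_exp.2 (by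
        have := hbound x hxA.1; linarith))
    have h2 : m * P (A \ Γ) ≤ P Γᶜ := by
      refine le_trans (mul_le_of_le_one_left zero_le' hm1) (measure_mono ?_)
      intro x hx; exact hx.2
    have h3 : m * P A ≤ Q Γ + P Γᶜ := by
      calc m * P A ≤ m * (P (A ∩ Γ) + P (A \ Γ)) := by
            gcongr m * ?_
            exact le_of_eq (measure_inter_add_diff A hΓ).symm
      _ = m * P (A ∩ Γ) + m * P (A \ Γ) := by rw [mul_add]
      _ ≤ Q (A ∩ Γ) + P Γᶜ := add_le_add h1 h2
      _ ≤ Q Γ + P Γᶜ := by gcongr; exact Set.inter_subset_right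
    calc P Γ + m * P A ≤ P Γ + (Q Γ + P Γᶜ) := by gcongr
    _ = (P Γ + P Γᶜ) + Q Γ := by ring
    _ = 1 + Q Γ := by rw [measure_add_measure_compl hΓ, measure_univ]
  have hmPA1 : m * P A ≤ 1 := le_trans (mul_le_of_le_one_left zero_le' hm1) prob_le_one
  have htv : tvDist P Q ≤ 1 - m * P A := by
    rw [tvDist]
    refine iSup₂_le fun Γ hΓ => ?_
    rw [tsub_le_iff_right]
    calc P Γ ≤ (1 + Q Γ) - m * P A := ENNReal.le_sub_of_add_le_right
          (ne_top_of_le_ne_top ENNReal.one_ne_top hmPA1) (hkey Γ hΓ)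
    _ = (1 - m * P A) + Q Γ :=
        (ENNReal.sub_add_eq_add_sub hmPA1 (ne_top_of_le_ne_top ENNReal.one_ne_top hmPA1)).symm
  calc m * P A = 1 - (1 - m * P A) := (ENNReal.sub_sub_cancel ENNReal.one_ne_top hmPA1).symm
  _ ≤ 1 - tvDist P Q := tsub_le_tsub_left htv 1

lemma ereal_coe_mul_coe_add (a : ℝ) {b : ℝ} (hb : 0 < b) (X : EReal) :
    (b : EReal) * ((a : EReal) + X) = ((b * a : ℝ) : EReal) + (b : EReal) * X := by
  induction X using EReal.rec with
  | bot =>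
      rw [EReal.add_bot, EReal.coe_mul_bot_of_pos hb, EReal.add_bot]
  | coe x =>
      rw [← EReal.coe_add, ← EReal.coe_mul, ← EReal.coe_mul, ← EReal.coe_add]
      norm_cast
      ring
  | top =>
      rw [EReal.coe_add_top, EReal.coe_mul_top_of_pos hb, EReal.coe_add_top]

lemma ereal_le_of_forall_eps {x y : EReal} (h : ∀ ε : ℝ, 0 < ε → x + ((-ε : ℝ) : EReal) ≤ y) :
    x ≤ y := by
  induction x using EReal.rec with
  | bot => exact bot_le
  | coe a =>
      induction y using EReal.rec with
      | bot =>
          exfalso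
          have := h 1 one_pos
          rw [← EReal.coe_add, le_bot_iff] at this
          exact EReal.coe_ne_bot _ this
      | coe b =>
          by_contra hlt
          push_neg at hlt
          have hba : b < a := EReal.coe_lt_coe_iff.1 hlt
          have := h ((a - b) / 2) (by linarith)
          rw [← EReal.coe_add, EReal.coe_le_coe_iff] at this
          linarith
      | top => exact le_top
  | top =>
      have := h 1 one_pos
      rw [EReal.top_add_coe] at this
      exact this

end Aux

/-- **Bounds on the Chernoff error exponents.**
Under a large-deviation lower bound with rate `I : ℝ → [0,+∞]` for the laws of
`r_λ⁻¹σ_λ` under `P_λ`, with `ē(α) := limsup r_λ⁻¹ log ∫ e^{−ασ_λ} dP_λ`, the lower and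
upper Chernoff exponents `c̲ = liminf r_λ⁻¹ log (1 − ‖P_λ−P̂_λ‖_var)` and
`c̄ = limsup r_λ⁻¹ log (1 − ‖P_λ−P̂_λ‖_var)` satisfy
`−I(0) ≤ c̲ ≤ c̄ ≤ inf_{α∈[0,1]} ē(α)` in `[−∞,+∞]`. -/
theorem chernoff_exponent_bounds
    {ι : Type*} (l : Filter ι) [l.NeBot]
    (r : ι → ℝ) (hrpos : ∀ i, 0 < r i) (hr : Tendsto r l atTop)
    (Ω : ι → Type*) [∀ i, MeasurableSpace (Ω i)]
    (P Phat : ∀ i, Measure (Ω i))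
    (hPprob : ∀ i, IsProbabilityMeasure (P i))
    (hPhatprob : ∀ i, IsProbabilityMeasure (Phat i))
    (hac : ∀ i, P i ≪ Phat i) (hac' : ∀ i, Phat i ≪ P i)
    (I : ℝ → ℝ≥0∞)
    (hLDPlower : ∀ U : Set ℝ, IsOpen U →
      -(⨅ s ∈ U, (I s : EReal))
        ≤ liminf (fun i => ((r i)⁻¹ : EReal) *
            ENNReal.log (P i {x | (r i)⁻¹ * entropyProduction (P i) (Phat i) x ∈ U})) l)
    (ebar : ℝ → EReal)
    (hebar : ∀ α : ℝ, ebar α = limsup (fun i => ((r i)⁻¹ : EReal) *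
        ENNReal.log (∫⁻ x, ENNReal.ofReal
          (Real.exp (-α * entropyProduction (P i) (Phat i) x)) ∂(P i))) l)
    (clow cup : EReal)
    (hclow : clow = liminf (fun i => ((r i)⁻¹ : EReal) *
        ENNReal.log (1 - tvDist (P i) (Phat i))) l)
    (hcup : cup = limsup (fun i => ((r i)⁻¹ : EReal) *
        ENNReal.log (1 - tvDist (P i) (Phat i))) l) :
    -(I 0 : EReal) ≤ clow ∧ clow ≤ cup ∧ cup ≤ ⨅ α ∈ Set.Icc (0 : ℝ) 1, ebar α := by
  have hinv : ∀ i, (0:ℝ) < (r i)⁻¹ := fun i => inv_pos.2 (hrpos i)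
  haveI := hPprob; haveI := hPhatprob
  refine ⟨?_, ?_, ?_⟩
  · -- lower bound
    rw [hclow]
    refine ereal_le_of_forall_eps fun ε hε => ?_
    set U : Set ℝ := Set.Ioo (-ε) ε with hU
    have hUopen : IsOpen U := isOpen_Ioo
    set v : ι → EReal := fun i => ((r i)⁻¹ : EReal) *
        ENNReal.log (P i {x | (r i)⁻¹ * entropyProduction (P i) (Phat i) x ∈ U}) with hv
    have hLD : -(I 0 : EReal) ≤ liminf v l := by
      refine le_trans ?_ (hLDPlower U hUopen)
      rw [EReal.neg_le_neg_iff]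
      exact iInf₂_le 0 ⟨by linarith, hε⟩
    have hpt : ∀ i, ((-ε : ℝ) : EReal) + v i ≤ ((r i)⁻¹ : EReal) *
        ENNReal.log (1 - tvDist (P i) (Phat i)) := by
      intro i
      set A : Set (Ω i) := {x | (r i)⁻¹ * entropyProduction (P i) (Phat i) x ∈ U} with hA
      have hbound : ∀ x ∈ A, entropyProduction (P i) (Phat i) x ≤ r i * ε := by
        intro x hx
        have h2 : (r i)⁻¹ * entropyProduction (P i) (Phat i) x < ε := hx.2
        have h0 := hrpos i
        calc entropyProduction (P i) (Phat i) x
            = r i * ((r i)⁻¹ * entropyProduction (P i) (Phat i) x) := by field_simp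
        _ ≤ r i * ε := by nlinarith
      have hB := le_one_sub_tvDist (hac i) (hac' i)
        (mul_pos (hrpos i) hε).le hbound
      have hlog := ENNReal.log_monotone hB
      rw [ENNReal.log_mul_add, ENNReal.log_ofReal_of_pos (Real.exp_pos _), Real.log_exp] at hlog
      have hmul := mul_le_mul_of_nonneg_left hlog
        (by exact_mod_cast (hinv i).le : (0:EReal) ≤ ((r i)⁻¹ : ℝ))
      rw [ereal_coe_mul_coe_add _ (hinv i)] at hmul
      have heq : ((r i)⁻¹ * -(r i * ε) : ℝ) = -ε := by
        rw [mul_neg, ← mul_assoc, inv_mul_cancel₀ (hrpos i).ne', one_mul]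
      rw [heq] at hmul
      calc ((-ε : ℝ) : EReal) + v i
          = (((-ε : ℝ)) : EReal) + ((r i)⁻¹ : EReal) * ENNReal.log (P i A) := rfl
      _ ≤ ((r i)⁻¹ : EReal) * ENNReal.log (1 - tvDist (P i) (Phat i)) := by
          rw [add_comm] at hmul ⊢
          exact hmul
    calc -(I 0 : EReal) + ((-ε : ℝ) : EReal)
        = ((-ε : ℝ) : EReal) + -(I 0 : EReal) := add_comm _ _
    _ ≤ ((-ε : ℝ) : EReal) + liminf v l := by gcongr
    _ ≤ liminf (fun i => ((-ε : ℝ) : EReal) + v i) l := by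
        have h := EReal.le_liminf_add (f := l) (u := fun _ => ((-ε : ℝ) : EReal)) (v := v)
        rwa [liminf_const] at h
    _ ≤ liminf (fun i => ((r i)⁻¹ : EReal) *
          ENNReal.log (1 - tvDist (P i) (Phat i))) l :=
        liminf_le_liminf (Eventually.of_forall hpt)
  · rw [hclow, hcup]
    exact liminf_le_limsup
  · rw [hcup]
    refine le_iInf fun α => le_iInf fun hα => ?_
    rw [hebar α]
    refine limsup_le_limsup (Eventually.of_forall fun i => ?_)
    exact mul_le_mul_of_nonneg_left
      (ENNReal.log_monotone (one_sub_tvDist_le (hac i) (hac' i) hα.1 hα.2))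
      (by exact_mod_cast (hinv i).le : (0:EReal) ≤ ((r i)⁻¹ : ℝ))
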